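/- The third error term is controlled by the L₂ distance: if f† has 1/μ₀-Lipschitz derivative (i.e., f is μ₀-strongly convex) and the density ratio q/p is bounded by θ₁, then |E_Q[t̂ − t*] − E_P[f†(t̂) − f†(t*)]| ≤ C·‖t̂ − t*‖_{L₂(P)} for a constant C depending only on μ₀, θ₁, and the uniform bound M on |t̂|, |t*|. -/

import Mathlib

open MeasureTheory

lemma taylor_aux (μ₀ : ℝ) (hμ₀ : 0 < μ₀) (fconj g : ℝ → ℝ)
    (hd : ∀ u : ℝ, HasDerivAt fconj (g u) u)
    (hLip : ∀ u₁ u₂ : ℝ, |g u₁ - g u₂| ≤ (1 / μ₀) * |u₁ - u₂|)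
    (a b : ℝ) :
    |fconj b - fconj a - (b - a) * g a| ≤ (1 / μ₀) * (b - a) ^ 2 := by
  have hcont : Continuous fconj :=
    Differentiable.continuous (fun x => (hd x).differentiableAt)
  have key : ∃ c : ℝ, |c - a| ≤ |b - a| ∧ fconj b - fconj a = (b - a) * g c := by
    rcases lt_trichotomy a b with h | h | h
    · obtain ⟨c, hc, hc'⟩ := exists_hasDerivAt_eq_slope fconj g h
        hcont.continuousOn (fun x _ => hd x)
      refine ⟨c, ?_, ?_⟩
      · rw [abs_of_pos (by linarith [hc.1] : (0:ℝ) < c - a),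
          abs_of_pos (by linarith : (0:ℝ) < b - a)]
        linarith [hc.2]
      · have hba : b - a ≠ 0 := sub_ne_zero.mpr h.ne'
        field_simp at hc'
        linarith [hc']
    · exact ⟨a, by simp [h], by simp [h]⟩
    · obtain ⟨c, hc, hc'⟩ := exists_hasDerivAt_eq_slope fconj g h
        hcont.continuousOn (fun x _ => hd x)
      refine ⟨c, ?_, ?_⟩
      · rw [abs_of_neg (by linarith [hc.2] : c - a < 0),
          abs_of_neg (by linarith : b - a < 0)]
        linarith [hc.1]
      · have hab : a - b ≠ 0 := sub_ne_zero.mpr h.ne'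
        field_simp at hc'
        linarith [hc']
  obtain ⟨c, hca, heq⟩ := key
  have h1 : |fconj b - fconj a - (b - a) * g a| = |b - a| * |g c - g a| := by
    rw [heq, ← mul_sub, abs_mul]
  rw [h1]
  calc |b - a| * |g c - g a| ≤ |b - a| * ((1 / μ₀) * |c - a|) :=
        mul_le_mul_of_nonneg_left (hLip c a) (abs_nonneg _)
    _ ≤ |b - a| * ((1 / μ₀) * |b - a|) := by
        have : (0:ℝ) ≤ 1 / μ₀ := by positivity
        gcongr
    _ = (1 / μ₀) * (b - a) ^ 2 := by
        rw [show (b-a)^2 = |b-a| * |b-a| by rw [abs_mul_abs_self]; ring]; ring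

theorem third_error_term_L2_control
    (μ₀ θ₀ θ₁ M : ℝ) (hμ₀ : 0 < μ₀) (hθ₀ : 0 < θ₀) (hθ : θ₀ ≤ θ₁) (hM : 0 < M) :
    ∃ C : ℝ, 0 < C ∧
      ∀ (Ω : Type) (_ : MeasurableSpace Ω) (μ : Measure Ω)
        (f' fconj g : ℝ → ℝ) (p q that : Ω → ℝ),
        (∀ u : ℝ, HasDerivAt fconj (g u) u) →
        (∀ u₁ u₂ : ℝ, |g u₁ - g u₂| ≤ (1 / μ₀) * |u₁ - u₂|) →
        (∀ x, 0 < p x) → (∀ x, 0 < q x) →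
        (∀ x, q x / p x ∈ Set.Icc θ₀ θ₁) →
        (∫ x, p x ∂μ = 1) → (∫ x, q x ∂μ = 1) →
        (∀ x, g (f' (q x / p x)) = q x / p x) →
        (∀ x, |that x| ≤ M) → (∀ x, |f' (q x / p x)| ≤ M) →
        Integrable (fun x => (that x - f' (q x / p x)) * q x) μ →
        Integrable (fun x => (fconj (that x) - fconj (f' (q x / p x))) * p x) μ →
        Integrable (fun x => (that x - f' (q x / p x)) ^ 2 * p x) μ →
        |∫ x, (that x - f' (q x / p x)) * q x ∂μ -
            ∫ x, (fconj (that x) - fconj (f' (q x / p x))) * p x ∂μ| ≤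
          C * Real.sqrt (∫ x, (that x - f' (q x / p x)) ^ 2 * p x ∂μ) := by
  refine ⟨2 * M / μ₀, by positivity, ?_⟩
  intro Ω _ μ f' fconj g p q that hd hLip hp hq hr hip hiq hg hthat ht hI1 hI2 hI3
  set t : Ω → ℝ := fun x => f' (q x / p x) with ht_def
  set S : ℝ := ∫ x, (that x - t x) ^ 2 * p x ∂μ with hS_def
  have hS0 : 0 ≤ S := by
    apply integral_nonneg
    intro x
    have := (hp x).le
    positivity
  -- pointwise key bound
  have key : ∀ x, |(that x - t x) * q x - (fconj (that x) - fconj (t x)) * p x|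
      ≤ (1 / μ₀) * ((that x - t x) ^ 2 * p x) := by
    intro x
    have hpx := hp x
    have hgt : g (t x) = q x / p x := hg x
    have heq : (that x - t x) * q x - (fconj (that x) - fconj (t x)) * p x
        = -((fconj (that x) - fconj (t x) - (that x - t x) * g (t x)) * p x) := by
      rw [hgt]
      field_simp
      ring
    rw [heq, abs_neg, abs_mul, abs_of_pos hpx]
    have htaylor := taylor_aux μ₀ hμ₀ fconj g hd hLip (t x) (that x)
    calc |fconj (that x) - fconj (t x) - (that x - t x) * g (t x)| * p x
        ≤ ((1 / μ₀) * (that x - t x) ^ 2) * p x :=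
          mul_le_mul_of_nonneg_right htaylor hpx.le
      _ = (1 / μ₀) * ((that x - t x) ^ 2 * p x) := by ring
  -- integrability of p
  have hpInt : Integrable p μ := by
    by_contra h
    rw [integral_undef h] at hip
    norm_num at hip
  -- S ≤ (2M)^2
  have hS4M : S ≤ (2 * M) ^ 2 := by
    have hmono : ∀ x, (that x - t x) ^ 2 * p x ≤ (2 * M) ^ 2 * p x := by
      intro x
      have h1 : |that x - t x| ≤ 2 * M := by
        calc |that x - t x| ≤ |that x| + |t x| := abs_sub _ _
          _ ≤ M + M := add_le_add (hthat x) (ht x)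
          _ = 2 * M := by ring
      have h2 : (that x - t x) ^ 2 ≤ (2 * M) ^ 2 := by
        rw [show (that x - t x)^2 = |that x - t x| * |that x - t x| by
          rw [abs_mul_abs_self]; ring]
        nlinarith [abs_nonneg (that x - t x)]
      exact mul_le_mul_of_nonneg_right h2 (hp x).le
    calc S ≤ ∫ x, (2 * M) ^ 2 * p x ∂μ :=
          integral_mono hI3 (hpInt.const_mul _) hmono
      _ = (2 * M) ^ 2 * ∫ x, p x ∂μ := integral_const_mul _ _
      _ = (2 * M) ^ 2 := by rw [hip, mul_one]
  have hsqrtS : Real.sqrt S ≤ 2 * M := by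
    calc Real.sqrt S ≤ Real.sqrt ((2 * M) ^ 2) := Real.sqrt_le_sqrt hS4M
      _ = 2 * M := Real.sqrt_sq (by positivity)
  -- main chain
  have hsub : ∫ x, (that x - t x) * q x ∂μ -
      ∫ x, (fconj (that x) - fconj (t x)) * p x ∂μ
      = ∫ x, ((that x - t x) * q x - (fconj (that x) - fconj (t x)) * p x) ∂μ :=
    (integral_sub hI1 hI2).symm
  rw [hsub]
  have habs : |∫ x, ((that x - t x) * q x - (fconj (that x) - fconj (t x)) * p x) ∂μ|
      ≤ ∫ x, |(that x - t x) * q x - (fconj (that x) - fconj (t x)) * p x| ∂μ := by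
    have := norm_integral_le_integral_norm
      (μ := μ) (f := fun x => (that x - t x) * q x - (fconj (that x) - fconj (t x)) * p x)
    simpa [Real.norm_eq_abs] using this
  have hmid : ∫ x, |(that x - t x) * q x - (fconj (that x) - fconj (t x)) * p x| ∂μ
      ≤ ∫ x, (1 / μ₀) * ((that x - t x) ^ 2 * p x) ∂μ := by
    apply integral_mono ((hI1.sub hI2).abs) (hI3.const_mul _) key
  have hfin : ∫ x, (1 / μ₀) * ((that x - t x) ^ 2 * p x) ∂μ = (1 / μ₀) * S := by
    rw [integral_const_mul]
  have hsqS : Real.sqrt S * Real.sqrt S = S := Real.mul_self_sqrt hS0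
  have hsqrt_nonneg : 0 ≤ Real.sqrt S := Real.sqrt_nonneg S
  calc |∫ x, ((that x - t x) * q x - (fconj (that x) - fconj (t x)) * p x) ∂μ|
      ≤ (1 / μ₀) * S := by rw [← hfin]; exact habs.trans hmid
    _ ≤ 2 * M / μ₀ * Real.sqrt S := by
        have hle : S ≤ 2 * M * Real.sqrt S := by nlinarith [hsqS, hsqrtS, hsqrt_nonneg]
        calc (1 / μ₀) * S ≤ (1 / μ₀) * (2 * M * Real.sqrt S) := by
              have h0 : (0:ℝ) ≤ 1 / μ₀ := by positivity
              exact mul_le_mul_of_nonneg_left hle h0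
          _ = 2 * M / μ₀ * Real.sqrt S := by ring
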